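/- Let dc : 𝔤 → V* be a linear map satisfying the infinitesimal cocycle identity dc([ξ,η]) = ξ·dc(η) − η·dc(ξ) for all ξ,η ∈ 𝔤. Then for all ξ ∈ 𝔤, v ∈ V, a ∈ V*, the following identity holds in 𝔤*: (ξv)⋄a + v⋄(ξa) + v⋄dc(ξ) − dc^T(ξv) = −ad*_ξ( v⋄a − dc^T(v) ). -/
import Mathlib


/- Setup: 𝔤 a finite-dimensional real Lie algebra, V a finite-dimensional real
vector space with a representation ρ of 𝔤; duals, dual action
⟨ξa, v⟩ = −⟨a, ξv⟩, diamond ⟨v⋄a, ξ⟩ = −⟨ξa, v⟩, coadjoint operator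
⟨ad*_ξ μ, η⟩ = ⟨μ, [ξ,η]⟩, and transpose ⟨dc^T(v), ξ⟩ = ⟨dc(ξ), v⟩. -/

open LinearMap

variable {g V : Type*} [LieRing g] [LieAlgebra ℝ g] [AddCommGroup V] [Module ℝ V]

/-- The coadjoint operator `ad*_ξ μ = μ ∘ ad ξ`. -/
noncomputable def coad (ξ : g) (μ : Module.Dual ℝ g) : Module.Dual ℝ g :=
  μ.comp (LieAlgebra.ad ℝ g ξ)

/-- The induced action of `𝔤` on the dual `V*`: `⟨ξa, v⟩ = −⟨a, ξv⟩`. -/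
def dualAct (ρ : g →ₗ[ℝ] Module.End ℝ V) (ξ : g) (a : Module.Dual ℝ V) :
    Module.Dual ℝ V :=
  -(a.comp (ρ ξ))

/-- The diamond operation `⟨v⋄a, ξ⟩ = −⟨ξa, v⟩ = ⟨a, ξv⟩`. -/
def diamond (ρ : g →ₗ[ℝ] Module.End ℝ V) (v : V) (a : Module.Dual ℝ V) :
    Module.Dual ℝ g :=
  a.comp ((LinearMap.flip ρ) v)

/-- The transpose `dc^T : V → 𝔤*`, `⟨dc^T(v), ξ⟩ = ⟨dc(ξ), v⟩`. -/
def dcT (dc : g →ₗ[ℝ] Module.Dual ℝ V) (v : V) : Module.Dual ℝ g :=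
  (LinearMap.flip dc) v

/-- If the linear map `dc : 𝔤 → V*` satisfies the
infinitesimal cocycle identity `dc([ξ,η]) = ξ·dc(η) − η·dc(ξ)`, then for all
`ξ ∈ 𝔤`, `v ∈ V`, `a ∈ V*`:
`(ξv)⋄a + v⋄(ξa) + v⋄dc(ξ) − dc^T(ξv) = −ad*_ξ( v⋄a − dc^T(v) )` in `𝔤*`. -/
theorem diamond_cocycle_identity
    [FiniteDimensional ℝ g] [FiniteDimensional ℝ V]
    (ρ : g →ₗ[ℝ] Module.End ℝ V)
    (hρ : ∀ ξ η : g, ρ ⁅ξ, η⁆ = ρ ξ * ρ η - ρ η * ρ ξ)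
    (dc : g →ₗ[ℝ] Module.Dual ℝ V)
    (hdc : ∀ ξ η : g, dc ⁅ξ, η⁆ = dualAct ρ ξ (dc η) - dualAct ρ η (dc ξ))
    (ξ : g) (v : V) (a : Module.Dual ℝ V) :
    diamond ρ (ρ ξ v) a + diamond ρ v (dualAct ρ ξ a) + diamond ρ v (dc ξ)
        - dcT dc (ρ ξ v)
      = -(coad ξ (diamond ρ v a - dcT dc v)) := by
  ext η
  simp only [coad, diamond, dualAct, dcT, LinearMap.add_apply, LinearMap.sub_apply,
    LinearMap.neg_apply, LinearMap.comp_apply, LinearMap.flip_apply, LieAlgebra.ad_apply,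
    hρ, hdc, Module.End.mul_apply, map_sub, map_neg]
  ring
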